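/- Let r ≥ 2 and Δ ≥ r + 2 be integers and suppose a Steiner system S(2, r, (r − 1)Δ + 1) exists. Then its Levi graph G has maximum degree Δ(G) = Δ and χ_r(G) ≤ (r − 1)Δ + 1. -/

import Mathlib

open SimpleGraph

/-- A proper coloring `φ : V → Fin k` is `r`-hued if every vertex sees at least
`min r (deg v)` distinct colors on its neighborhood. -/
def IsRHuedColoring {V : Type*} (G : SimpleGraph V) (r k : ℕ) (φ : V → Fin k) : Prop :=
  (∀ ⦃u v⦄, G.Adj u v → φ u ≠ φ v) ∧
  ∀ v : V, min r (G.neighborSet v).ncard ≤ (φ '' G.neighborSet v).ncard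

/-- The `r`-hued chromatic number of a graph: the least `k` admitting an `r`-hued
`k`-coloring. -/
noncomputable def rHuedChromNum {V : Type*} (G : SimpleGraph V) (r : ℕ) : ℕ :=
  sInf {k | ∃ φ : V → Fin k, IsRHuedColoring G r k φ}

/-- The maximum degree of a finite simple graph. -/
noncomputable def maxDeg {V : Type*} [Fintype V] (G : SimpleGraph V) : ℕ :=
  Finset.univ.sup fun v => (G.neighborSet v).ncard

/-- A Steiner system `S(2, r, n)`: `V` has `n` elements, the blocks are `r`-element
subsets of `V`, and every `2`-element subset of `V` lies in exactly one block. -/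
def IsSteinerSystem {α : Type*} (r n : ℕ) (V : Finset α) (B : Finset (Finset α)) : Prop :=
  V.card = n ∧ (∀ b ∈ B, b ⊆ V ∧ b.card = r) ∧
  ∀ p : Finset α, p ⊆ V → p.card = 2 → ∃! b, b ∈ B ∧ p ⊆ b

/-- The Levi (incidence) graph of a set system: points on the left, blocks on the right,
with an edge when the point lies in the block. -/
def leviGraph {α : Type*} (V : Finset α) (B : Finset (Finset α)) :
    SimpleGraph ({x // x ∈ V} ⊕ {b // b ∈ B}) :=
  SimpleGraph.fromRel fun u w =>
    match u, w with
    | Sum.inl x, Sum.inr b => (x : α) ∈ (b : Finset α)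
    | _, _ => False

open Finset

section
variable {α : Type*} [DecidableEq α] {r Δ : ℕ} {V : Finset α} {B : Finset (Finset α)}

lemma pair_unique (hS : IsSteinerSystem r ((r - 1) * Δ + 1) V B) {u v : α}
    (hu : u ∈ V) (hv : v ∈ V) (hne : u ≠ v) :
    ∃! b, b ∈ B ∧ u ∈ b ∧ v ∈ b := by
  obtain ⟨b, ⟨hbB, hsub⟩, huniq⟩ := hS.2.2 {u, v}
    (by intro a ha; simp at ha; rcases ha with rfl | rfl <;> assumption)
    (Finset.card_pair hne)
  refine ⟨b, ⟨hbB, ?_, ?_⟩, fun b' hb' => huniq b' ⟨hb'.1, ?_⟩⟩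
  · exact hsub (by simp)
  · exact hsub (by simp)
  · intro a ha; simp at ha; rcases ha with rfl | rfl
    exacts [hb'.2.1, hb'.2.2]

lemma blocks_eq (hS : IsSteinerSystem r ((r - 1) * Δ + 1) V B) {b1 b2 : Finset α} {u v : α}
    (hb1 : b1 ∈ B) (hb2 : b2 ∈ B) (hne : u ≠ v)
    (hu1 : u ∈ b1) (hv1 : v ∈ b1) (hu2 : u ∈ b2) (hv2 : v ∈ b2) : b1 = b2 := by
  obtain ⟨b, _, huniq⟩ := pair_unique hS ((hS.2.1 b1 hb1).1 hu1) ((hS.2.1 b1 hb1).1 hv1) hne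
  rw [huniq b1 ⟨hb1, hu1, hv1⟩, huniq b2 ⟨hb2, hu2, hv2⟩]

lemma point_deg (hr : 2 ≤ r) (hS : IsSteinerSystem r ((r - 1) * Δ + 1) V B) {v : α}
    (hv : v ∈ V) : (B.filter (fun b => v ∈ b)).card = Δ := by
  set F := B.filter (fun b => v ∈ b) with hF
  have hdisj : ∀ b1 ∈ F, ∀ b2 ∈ F, b1 ≠ b2 → Disjoint (b1.erase v) (b2.erase v) := by
    intro b1 h1 b2 h2 hne
    simp only [hF, mem_filter] at h1 h2
    rw [Finset.disjoint_left]
    intro a ha1 ha2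
    exact hne (blocks_eq hS h1.1 h2.1 (Finset.ne_of_mem_erase ha1) (Finset.mem_of_mem_erase ha1)
      h1.2 (Finset.mem_of_mem_erase ha2) h2.2)
  have hun : F.biUnion (fun b => b.erase v) = V.erase v := by
    ext a
    simp only [Finset.mem_biUnion, Finset.mem_erase, hF, mem_filter]
    constructor
    · rintro ⟨b, ⟨hbB, hvb⟩, hab⟩
      exact ⟨hab.1, (hS.2.1 b hbB).1 hab.2⟩
    · rintro ⟨hav, haV⟩
      obtain ⟨b, ⟨hbB, hvb, hab⟩, -⟩ := pair_unique hS hv haV (Ne.symm hav)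
      exact ⟨b, ⟨hbB, hvb⟩, hav, hab⟩
  have hbu := Finset.card_biUnion hdisj
  rw [hun, Finset.card_erase_of_mem hv, hS.1] at hbu
  have hsum : ∑ u ∈ F, (u.erase v).card = F.card * (r - 1) := by
    rw [Finset.sum_congr rfl (fun b hb => ?_), Finset.sum_const, smul_eq_mul]
    simp only [hF, mem_filter] at hb
    rw [Finset.card_erase_of_mem hb.2, (hS.2.1 b hb.1).2]
  have hcard : F.card * (r - 1) = (r - 1) * Δ := by
    rw [← hsum, ← hbu]; omega
  have h1 : 0 < r - 1 := by omega
  exact Nat.eq_of_mul_eq_mul_left h1 ((mul_comm (r-1) F.card).trans hcard)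

lemma levi_adj_lr {x : {x // x ∈ V}} {b : {b // b ∈ B}} :
    (leviGraph V B).Adj (Sum.inl x) (Sum.inr b) ↔ (x : α) ∈ (b : Finset α) := by
  simp [leviGraph, SimpleGraph.fromRel_adj]

lemma levi_adj_ll {x y : {x // x ∈ V}} : ¬ (leviGraph V B).Adj (Sum.inl x) (Sum.inl y) := by
  simp [leviGraph, SimpleGraph.fromRel_adj]

lemma levi_adj_rr {x y : {b // b ∈ B}} : ¬ (leviGraph V B).Adj (Sum.inr x) (Sum.inr y) := by
  simp [leviGraph, SimpleGraph.fromRel_adj]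

lemma levi_nb_inl (x : {x // x ∈ V}) : (leviGraph V B).neighborSet (Sum.inl x) =
    Sum.inr '' {b : {b // b ∈ B} | (x : α) ∈ (b : Finset α)} := by
  ext (y | b)
  · simp [SimpleGraph.mem_neighborSet, levi_adj_ll]
  · simp [SimpleGraph.mem_neighborSet, levi_adj_lr]

lemma levi_nb_inr (b : {b // b ∈ B}) : (leviGraph V B).neighborSet (Sum.inr b) =
    Sum.inl '' {x : {x // x ∈ V} | (x : α) ∈ (b : Finset α)} := by
  ext (y | c)
  · simp [SimpleGraph.mem_neighborSet, ((leviGraph V B).adj_comm _ _), levi_adj_lr]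
  · simp [SimpleGraph.mem_neighborSet, levi_adj_rr]

lemma subtype_filter_card {β : Type*} {s : Finset β} {P : β → Prop} [DecidablePred P] :
    (Finset.univ.filter (fun b : {b // b ∈ s} => P b.1)).card = (s.filter P).card := by
  apply Finset.card_bij (fun b _ => b.1)
  · intro a ha; simp only [mem_filter, Finset.mem_univ, true_and] at ha
    simp [a.2, ha]
  · intro a _ b _ h; exact Subtype.ext h
  · intro b hb; simp only [mem_filter] at hb
    exact ⟨⟨b, hb.1⟩, by simp [hb.2], rfl⟩

lemma set_ncard_subtype {β : Type*} {s : Finset β} {P : β → Prop} [DecidablePred P] :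
    ({b : {b // b ∈ s} | P b.1} : Set _).ncard = (s.filter P).card := by
  rw [← subtype_filter_card (s := s) (P := P), ← Set.ncard_coe_finset]
  congr 1
  ext b
  simp

lemma levi_deg_inl (hr : 2 ≤ r) (hS : IsSteinerSystem r ((r - 1) * Δ + 1) V B)
    (x : {x // x ∈ V}) : ((leviGraph V B).neighborSet (Sum.inl x)).ncard = Δ := by
  rw [levi_nb_inl, Set.ncard_image_of_injective _ Sum.inr_injective,
    set_ncard_subtype (P := fun b => (x : α) ∈ b), point_deg hr hS x.2]

lemma levi_deg_inr (hS : IsSteinerSystem r ((r - 1) * Δ + 1) V B)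
    (b : {b // b ∈ B}) : ((leviGraph V B).neighborSet (Sum.inr b)).ncard = r := by
  rw [levi_nb_inr, Set.ncard_image_of_injective _ Sum.inl_injective]
  rw [set_ncard_subtype (s := V) (P := fun x => x ∈ (b : Finset α))]
  have : V.filter (fun x => x ∈ (b : Finset α)) = (b : Finset α) := by
    ext a
    simp only [mem_filter]
    exact ⟨fun h => h.2, fun h => ⟨(hS.2.1 b b.2).1 h, h⟩⟩
  rw [this, (hS.2.1 b b.2).2]

end

section
variable {α : Type*} [DecidableEq α] {r Δ : ℕ} {V : Finset α} {B : Finset (Finset α)}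

lemma maxDeg_levi (hr : 2 ≤ r) (hΔ : r + 2 ≤ Δ)
    (hS : IsSteinerSystem r ((r - 1) * Δ + 1) V B) : maxDeg (leviGraph V B) = Δ := by
  have hV : V.Nonempty := by
    rw [← Finset.card_pos, hS.1]; omega
  obtain ⟨x0, hx0⟩ := hV
  apply le_antisymm
  · apply Finset.sup_le
    rintro (x | b) -
    · rw [levi_deg_inl hr hS]
    · rw [levi_deg_inr hS]; omega
  · have h1 := levi_deg_inl (B := B) hr hS ⟨x0, hx0⟩
    have h2 := Finset.le_sup (f := fun v => ((leviGraph V B).neighborSet v).ncard)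
      (Finset.mem_univ (Sum.inl ⟨x0, hx0⟩))
    rw [h1] at h2
    exact h2

lemma exists_good_p (hr : 2 ≤ r) (hΔ : r + 2 ≤ Δ)
    (hS : IsSteinerSystem r ((r - 1) * Δ + 1) V B) :
    ∃ p : Finset α → α, (∀ b ∈ B, p b ∈ V ∧ p b ∉ b) ∧
      (∀ v ∈ V, r ≤ ((B.filter (fun b => v ∈ b)).image p).card) := by
  classical
  haveI : NeZero r := ⟨by omega⟩
  have hVc : V.card = (r - 1) * Δ + 1 := hS.1
  have harith : r * (r - 2) + (2 * r + 1) ≤ (r - 1) * Δ + 1 := by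
    have h1 : (r - 1) * (r + 2) ≤ (r - 1) * Δ := Nat.mul_le_mul_left _ hΔ
    obtain ⟨s, rfl⟩ : ∃ s, r = s + 2 := ⟨r - 2, by omega⟩
    have hs1 : s + 2 - 2 = s := by omega
    have hs2 : s + 2 - 1 = s + 1 := by omega
    rw [hs1, hs2] at *
    nlinarith [h1]
  have hfin : ∀ k : Fin r, k + 1 ≠ k := by
    intro k h
    have h1r : 1 % r = 1 := Nat.mod_eq_of_lt (by omega)
    have hv := congrArg Fin.val h
    rw [Fin.val_add, Fin.val_one', h1r] at hv
    have hk := k.isLt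
    by_cases hlt : k.val + 1 < r
    · rw [Nat.mod_eq_of_lt hlt] at hv; omega
    · have hkr : k.val + 1 = r := by omega
      rw [hkr, Nat.mod_self] at hv
      omega
  -- a block b0
  have hV2 : 1 < V.card := by
    rw [hVc]
    have := Nat.mul_le_mul (show 1 ≤ r - 1 by omega) (show 1 ≤ Δ by omega)
    omega
  obtain ⟨u0, hu0, v0, hv0, huv0⟩ := Finset.one_lt_card.mp hV2
  obtain ⟨b0, ⟨hb0B, -, -⟩, -⟩ := pair_unique hS hu0 hv0 huv0
  have hb0V : b0 ⊆ V := (hS.2.1 b0 hb0B).1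
  have hb0c : b0.card = r := (hS.2.1 b0 hb0B).2
  set e : {a // a ∈ b0} ≃ Fin r := Finset.equivFinOfCardEq hb0c with he
  set xi : Fin r → α := fun i => ((e.symm i : {a // a ∈ b0}) : α) with hxi
  have hxib0 : ∀ i, xi i ∈ b0 := fun i => (e.symm i).2
  have hxinj : Function.Injective xi := by
    intro i j h
    have h2 : (e.symm i) = (e.symm j) := Subtype.ext h
    simpa using congrArg e h2
  have hxval : ∀ (a : α) (h : a ∈ b0), xi (e ⟨a, h⟩) = a := by
    intro a h; simp [hxi]
  -- unique meet with b0
  have hmeet : ∀ b ∈ B, b ≠ b0 → ∀ a a', a ∈ b0 → a ∈ b → a' ∈ b0 → a' ∈ b → a = a' := by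
    intro b hb hne a a' h1 h2 h3 h4
    by_contra hne'
    exact hne (blocks_eq hS hb hb0B hne' h2 h4 h1 h3)
  -- a point z outside b0
  have hzex : (V \ b0).Nonempty := by
    rw [← Finset.card_pos]
    have h1 : b0.card ≤ V.card := Finset.card_le_card hb0V
    have h2 := Finset.le_card_sdiff b0 V
    have h3 : 1 * Δ ≤ (r - 1) * Δ := Nat.mul_le_mul_right Δ (by omega)
    omega
  obtain ⟨z, hz⟩ := hzex
  have hzV : z ∈ V := (Finset.mem_sdiff.mp hz).1
  have hzb0 : z ∉ b0 := (Finset.mem_sdiff.mp hz).2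
  -- blocks through xi i other than b0
  set C : Fin r → Finset (Finset α) := fun i => (B.filter (fun b => xi i ∈ b)).erase b0 with hC
  have hCmem : ∀ i b, b ∈ C i ↔ b ≠ b0 ∧ b ∈ B ∧ xi i ∈ b := by
    intro i b; simp [hC, Finset.mem_erase, Finset.mem_filter, and_assoc]
  have hCc : ∀ i, (C i).card = Δ - 1 := by
    intro i
    rw [hC]
    simp only
    rw [Finset.card_erase_of_mem (Finset.mem_filter.mpr ⟨hb0B, hxib0 i⟩),
      point_deg hr hS (hb0V (hxib0 i))]
  -- special blocks
  have hRiex : ∀ i : Fin r, ∃ t ⊆ C i, t.card = r - 2 :=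
    fun i => Finset.exists_subset_card_eq (by rw [hCc i]; omega)
  choose Ri hRisub hRic using hRiex
  set R : Finset (Finset α) := Finset.univ.biUnion Ri with hR
  have hRC : ∀ b ∈ R, ∃ i, b ∈ C i ∧ b ∈ Ri i := by
    intro b hb
    obtain ⟨i, -, hbi⟩ := Finset.mem_biUnion.mp hb
    exact ⟨i, hRisub i hbi, hbi⟩
  have hRcard : R.card ≤ r * (r - 2) := by
    calc R.card ≤ ∑ i : Fin r, (Ri i).card := Finset.card_biUnion_le
    _ = r * (r - 2) := by simp [hRic, Finset.sum_const, mul_comm]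
  have hRB : ∀ b ∈ R, b ∈ B := fun b hb =>
    ((hCmem (hRC b hb).choose b).mp (hRC b hb).choose_spec.1).2.1
  -- Hall's theorem
  set t : {c // c ∈ R} → Finset α := fun c => (V \ ((c : Finset α) ∪ b0)).erase z with ht
  have htc : ∀ c, r * (r - 2) ≤ (t c).card := by
    intro c
    have hc1 : ((c : Finset α) ∪ b0).card ≤ r + r := by
      refine le_trans (Finset.card_union_le _ _) ?_
      rw [(hS.2.1 _ (hRB _ c.2)).2, hb0c]
    have h2 := Finset.le_card_sdiff ((c : Finset α) ∪ b0) V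
    have h3 := Finset.pred_card_le_card_erase (s := V \ ((c : Finset α) ∪ b0)) (a := z)
    simp only [ht]
    have h4 := hVc
    have h5 := harith
    obtain ⟨N, hN⟩ : ∃ N, (r - 1) * Δ = N := ⟨_, rfl⟩
    rw [hN] at h4 h5
    obtain ⟨M, hM⟩ : ∃ M, r * (r - 2) = M := ⟨_, rfl⟩
    rw [hM] at h5 ⊢
    omega
  have hall : ∀ s : Finset {c // c ∈ R}, s.card ≤ (s.biUnion t).card := by
    intro s
    rcases s.eq_empty_or_nonempty with rfl | ⟨c, hc⟩
    · simp
    · have h1 : s.card ≤ R.card := by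
        have h0 := Finset.card_le_univ s
        rwa [Fintype.card_coe] at h0
      have h2 : (t c).card ≤ (s.biUnion t).card :=
        Finset.card_le_card (Finset.subset_biUnion_of_mem t hc)
      have := htc c
      omega
  obtain ⟨f, hfinj, hft⟩ := (Finset.all_card_le_biUnion_card_iff_exists_injective t).mp hall
  set y : Finset α → α := fun b => if h : b ∈ R then f ⟨b, h⟩ else z with hy
  have hyR : ∀ (b) (h : b ∈ R), y b = f ⟨b, h⟩ := by intro b h; simp [hy, h]
  have hymem : ∀ b ∈ R, y b ∈ V ∧ y b ∉ b ∧ y b ∉ b0 ∧ y b ≠ z := by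
    intro b h
    have h1 := hft ⟨b, h⟩
    simp only [ht, Finset.mem_erase, Finset.mem_sdiff, Finset.mem_union] at h1
    rw [hyR b h]
    tauto
  have hyinj : ∀ b ∈ R, ∀ b' ∈ R, y b = y b' → b = b' := by
    intro b h b' h' heq
    rw [hyR b h, hyR b' h'] at heq
    exact congrArg Subtype.val (hfinj heq)
  -- the successor map on b0 and the definition of p
  set succ : α → α := fun a => if h : a ∈ b0 then xi (e ⟨a, h⟩ + 1) else a with hsucc
  have hsuccval : ∀ (a : α) (h : a ∈ b0), succ a = xi (e ⟨a, h⟩ + 1) := by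
    intro a h; simp [hsucc, h]
  have hpsucc : ∀ i, succ (xi i) = xi (i + 1) := by
    intro i
    rw [hsuccval (xi i) (hxib0 i)]
    congr 2
    have h2 : (⟨xi i, hxib0 i⟩ : {a // a ∈ b0}) = e.symm i := Subtype.ext rfl
    rw [h2]; simp
  set p : Finset α → α := fun b =>
    if b = b0 then z
    else if hb : ∃ a, a ∈ b0 ∧ a ∈ b then (if b ∈ R then y b else succ hb.choose)
    else xi 0 with hp
  have hpb0 : p b0 = z := by simp [hp]
  have hb0nR : b0 ∉ R := fun h => ((hCmem (hRC b0 h).choose b0).mp (hRC b0 h).choose_spec.1).1 rfl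
  have hpR : ∀ b ∈ R, p b = y b := by
    intro b hb
    obtain ⟨i, hbC, -⟩ := hRC b hb
    rw [hCmem] at hbC
    have hex : ∃ a, a ∈ b0 ∧ a ∈ b := ⟨xi i, hxib0 i, hbC.2.2⟩
    simp only [hp]
    rw [if_neg hbC.1, dif_pos hex, if_pos hb]
  have hpmeet : ∀ b ∈ B, b ≠ b0 → b ∉ R → ∀ a, a ∈ b0 → a ∈ b → p b = succ a := by
    intro b hbB hne hnR a ha1 ha2
    have hex : ∃ a, a ∈ b0 ∧ a ∈ b := ⟨a, ha1, ha2⟩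
    have hch : hex.choose = a :=
      hmeet b hbB hne _ _ hex.choose_spec.1 hex.choose_spec.2 ha1 ha2
    simp only [hp]
    rw [if_neg hne, dif_pos hex, if_neg hnR, hch]
  have hpgood : ∀ b ∈ B, p b ∈ V ∧ p b ∉ b := by
    intro b hbB
    by_cases h0 : b = b0
    · subst h0; rw [hpb0]; exact ⟨hzV, hzb0⟩
    by_cases hex : ∃ a, a ∈ b0 ∧ a ∈ b
    · by_cases hbR : b ∈ R
      · rw [hpR b hbR]
        have h1 := hymem b hbR
        exact ⟨h1.1, h1.2.1⟩
      · obtain ⟨a, ha1, ha2⟩ := hex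
        rw [hpmeet b hbB h0 hbR a ha1 ha2, hsuccval a ha1]
        refine ⟨hb0V (hxib0 _), fun hmem => ?_⟩
        have heqa : xi (e ⟨a, ha1⟩ + 1) = a :=
          hmeet b hbB h0 _ _ (hxib0 _) hmem ha1 ha2
        have h2 : xi (e ⟨a, ha1⟩ + 1) = xi (e ⟨a, ha1⟩) := by rw [heqa, hxval a ha1]
        exact hfin _ (hxinj h2)
    · have hpd : p b = xi 0 := by
        simp only [hp]
        rw [if_neg h0, dif_neg hex]
      rw [hpd]
      exact ⟨hb0V (hxib0 0), fun hmem => hex ⟨xi 0, hxib0 0, hmem⟩⟩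
  refine ⟨p, hpgood, ?_⟩
  intro v hv
  set F := B.filter (fun b => v ∈ b) with hF
  by_cases hvb0 : v ∈ b0
  · -- v is a point of b0
    set i0 := e ⟨v, hvb0⟩ with hi0
    have hvxi : xi i0 = v := hxval v hvb0
    have hb0F : b0 ∈ F := Finset.mem_filter.mpr ⟨hb0B, hvb0⟩
    have hnotsub : ¬ C i0 ⊆ Ri i0 := by
      intro h
      have := Finset.card_le_card h
      rw [hCc, hRic] at this
      omega
    obtain ⟨c', hc'C, hc'R⟩ := Finset.not_subset.mp hnotsub
    have hnotR : ∀ c ∈ C i0, c ∉ Ri i0 → c ∉ R := by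
      intro c hcC hcRi hcr
      obtain ⟨j, hjC, hjRi⟩ := hRC c hcr
      have h1 := (hCmem i0 c).mp hcC
      have h2 := (hCmem j c).mp hjC
      have h3 : xi j = xi i0 := hmeet c h1.2.1 h1.1 _ _ (hxib0 j) h2.2.2 (hxib0 i0) h1.2.2
      have h4 : j = i0 := hxinj h3
      subst h4
      exact hcRi hjRi
    have hc'nR : c' ∉ R := hnotR c' hc'C hc'R
    have hc'1 := (hCmem i0 c').mp hc'C
    have hpc' : p c' = xi (i0 + 1) := by
      rw [hpmeet c' hc'1.2.1 hc'1.1 hc'nR (xi i0) (hxib0 i0) hc'1.2.2, hpsucc]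
    have hRiR : ∀ c ∈ Ri i0, c ∈ R :=
      fun c hc => Finset.mem_biUnion.mpr ⟨i0, Finset.mem_univ _, hc⟩
    have him : ∀ c ∈ Ri i0, p c = y c := fun c hc => hpR c (hRiR c hc)
    set S := insert z (insert (xi (i0+1)) ((Ri i0).image p)) with hSdef
    have hSsub : S ⊆ F.image p := by
      intro a ha
      simp only [hSdef, Finset.mem_insert] at ha
      rcases ha with rfl | rfl | ha
      · exact Finset.mem_image.mpr ⟨b0, hb0F, hpb0⟩
      · refine Finset.mem_image.mpr ⟨c', Finset.mem_filter.mpr ⟨hc'1.2.1, ?_⟩, hpc'⟩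
        rw [← hvxi]; exact hc'1.2.2
      · obtain ⟨c, hcRi, rfl⟩ := Finset.mem_image.mp ha
        have h1 := (hCmem i0 c).mp (hRisub i0 hcRi)
        refine Finset.mem_image.mpr ⟨c, Finset.mem_filter.mpr ⟨h1.2.1, ?_⟩, rfl⟩
        rw [← hvxi]; exact h1.2.2
    have hic : ((Ri i0).image p).card = r - 2 := by
      rw [← hRic i0]
      apply Finset.card_image_of_injOn
      intro a ha b hb heq
      rw [him a ha, him b hb] at heq
      exact hyinj a (hRiR a ha) b (hRiR b hb) heq
    have hxini : xi (i0+1) ∉ (Ri i0).image p := by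
      intro h
      obtain ⟨c, hc, heq⟩ := Finset.mem_image.mp h
      rw [him c hc] at heq
      exact (hymem c (hRiR c hc)).2.2.1 (heq ▸ hxib0 (i0+1))
    have hzni : z ∉ insert (xi (i0+1)) ((Ri i0).image p) := by
      simp only [Finset.mem_insert, Finset.mem_image]
      push_neg
      constructor
      · intro h; exact hzb0 (h ▸ hxib0 (i0+1))
      · intro c hc heq
        rw [him c hc] at heq
        exact (hymem c (hRiR c hc)).2.2.2 heq
    have hScard : S.card = r := by
      rw [hSdef, Finset.card_insert_of_notMem hzni, Finset.card_insert_of_notMem hxini, hic]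
      omega
    calc r = S.card := hScard.symm
    _ ≤ (F.image p).card := Finset.card_le_card hSsub
  · -- v is not a point of b0
    have hd : ∀ i : Fin r, ∃! b, b ∈ B ∧ v ∈ b ∧ xi i ∈ b := by
      intro i
      refine pair_unique hS hv (hb0V (hxib0 i)) (fun h => hvb0 ?_)
      rw [h]; exact hxib0 i
    choose d hdspec using hd
    have hdB : ∀ i, d i ∈ B := fun i => (hdspec i).1.1
    have hdv : ∀ i, v ∈ d i := fun i => (hdspec i).1.2.1
    have hdxi : ∀ i, xi i ∈ d i := fun i => (hdspec i).1.2.2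
    have hdb0 : ∀ i, d i ≠ b0 := by
      intro i h
      exact hvb0 (h ▸ hdv i)
    have hdinj : Function.Injective d := by
      intro i j h
      apply hxinj
      exact hmeet (d i) (hdB i) (hdb0 i) _ _ (hxib0 i) (hdxi i) (hxib0 j) (h ▸ hdxi j)
    set K := Finset.univ.filter (fun i : Fin r => d i ∈ R) with hK
    have hdK : ∀ i ∈ K, d i ∈ R := fun i hi => (Finset.mem_filter.mp hi).2
    have hpK : ∀ i ∈ K, p (d i) = y (d i) := fun i hi => hpR _ (hdK i hi)
    have hpnK : ∀ i ∉ K, p (d i) = xi (i + 1) := by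
      intro i hi
      have hnR : d i ∉ R := fun h => hi (Finset.mem_filter.mpr ⟨Finset.mem_univ _, h⟩)
      rw [hpmeet (d i) (hdB i) (hdb0 i) hnR (xi i) (hxib0 i) (hdxi i), hpsucc]
    set S := ((Finset.univ \ K).image (fun i => xi (i+1))) ∪ (K.image (fun i => y (d i)))
      with hSdef
    have hSsub : S ⊆ F.image p := by
      intro a ha
      rw [hSdef, Finset.mem_union] at ha
      rcases ha with ha | ha
      · obtain ⟨i, hi, rfl⟩ := Finset.mem_image.mp ha
        have hinK : i ∉ K := (Finset.mem_sdiff.mp hi).2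
        exact Finset.mem_image.mpr ⟨d i, Finset.mem_filter.mpr ⟨hdB i, hdv i⟩, hpnK i hinK⟩
      · obtain ⟨i, hi, rfl⟩ := Finset.mem_image.mp ha
        exact Finset.mem_image.mpr ⟨d i, Finset.mem_filter.mpr ⟨hdB i, hdv i⟩, hpK i hi⟩
    have h1 : ((Finset.univ \ K).image (fun i => xi (i+1))).card = r - K.card := by
      rw [Finset.card_image_of_injective _
        (fun a b h => by exact add_right_cancel (hxinj h)),
        Finset.card_sdiff_of_subset (Finset.subset_univ K), Finset.card_univ, Fintype.card_fin]
    have h2 : (K.image (fun i => y (d i))).card = K.card := by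
      apply Finset.card_image_of_injOn
      intro a ha b hb heq
      have haR := hdK a ha
      have hbR := hdK b hb
      exact hdinj (hyinj _ haR _ hbR heq)
    have hdisjS : Disjoint ((Finset.univ \ K).image (fun i => xi (i+1)))
        (K.image (fun i => y (d i))) := by
      rw [Finset.disjoint_left]
      intro a ha hb
      obtain ⟨i, -, rfl⟩ := Finset.mem_image.mp ha
      obtain ⟨j, hj, heq⟩ := Finset.mem_image.mp hb
      exact (hymem _ (hdK j hj)).2.2.1 (heq ▸ hxib0 (i+1))
    have hScard : S.card = r := by
      rw [hSdef, Finset.card_union_of_disjoint hdisjS, h1, h2]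
      have hKle : K.card ≤ r := by
        have h0 := Finset.card_le_univ K
        rwa [Fintype.card_fin] at h0
      omega
    calc r = S.card := hScard.symm
    _ ≤ (F.image p).card := Finset.card_le_card hSsub

end

/-- If `r ≥ 2`, `Δ ≥ r + 2`, and a Steiner system `S(2, r, (r - 1)Δ + 1)` exists, then
its Levi graph `G` satisfies `Δ(G) = Δ` and `χ_r(G) ≤ (r - 1)Δ + 1`. -/
theorem steiner_levi_maxDeg_and_rHued_le {α : Type*} {r Δ : ℕ} (hr : 2 ≤ r) (hΔ : r + 2 ≤ Δ)
    (V : Finset α) (B : Finset (Finset α)) (hS : IsSteinerSystem r ((r - 1) * Δ + 1) V B) :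
    maxDeg (leviGraph V B) = Δ ∧
      rHuedChromNum (leviGraph V B) r ≤ (r - 1) * Δ + 1 := by
  classical
  refine ⟨maxDeg_levi hr hΔ hS, ?_⟩
  obtain ⟨p, hpgood, hpcard⟩ := exists_good_p hr hΔ hS
  set hc : {a // a ∈ V} ≃ Fin ((r - 1) * Δ + 1) := Finset.equivFinOfCardEq hS.1 with hhc
  set g : {b // b ∈ B} → {a // a ∈ V} := fun b => ⟨p b.1, (hpgood b.1 b.2).1⟩ with hg
  set φ : ({x // x ∈ V} ⊕ {b // b ∈ B}) → Fin ((r - 1) * Δ + 1) :=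
    Sum.elim (fun a => hc a) (fun b => hc (g b)) with hφ
  have hproper : ∀ ⦃u w⦄, (leviGraph V B).Adj u w → φ u ≠ φ w := by
    rintro (x | b) (x' | b') hadj
    · exact absurd hadj levi_adj_ll
    · have hx : (x : α) ∈ (b' : Finset α) := levi_adj_lr.mp hadj
      simp only [hφ, Sum.elim_inl, Sum.elim_inr]
      intro heq
      have h1 : x = g b' := hc.injective heq
      have h2 : (x : α) = p b'.1 := congrArg Subtype.val h1
      exact (hpgood b'.1 b'.2).2 (h2 ▸ hx)
    · have hx : (x' : α) ∈ (b : Finset α) := levi_adj_lr.mp hadj.symm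
      simp only [hφ, Sum.elim_inl, Sum.elim_inr]
      intro heq
      have h1 : g b = x' := hc.injective heq
      have h2 : p b.1 = (x' : α) := congrArg Subtype.val h1
      exact (hpgood b.1 b.2).2 (h2.symm ▸ hx)
    · exact absurd hadj levi_adj_rr
  have hkeyl : ∀ x : {x // x ∈ V},
      (φ '' (leviGraph V B).neighborSet (Sum.inl x)).ncard
        = ((B.filter (fun b => (x : α) ∈ b)).image p).card := by
    intro x
    rw [levi_nb_inl, ← Set.image_comp]
    have h1 : φ ∘ Sum.inr = (fun a => hc a) ∘ g := rfl
    rw [h1, Set.image_comp]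
    have h2 : ((fun a => hc a) '' (g '' {b : {b // b ∈ B} | (x : α) ∈ (b : Finset α)})).ncard
        = (g '' {b : {b // b ∈ B} | (x : α) ∈ (b : Finset α)}).ncard :=
      Set.ncard_image_of_injective _ hc.injective
    rw [h2, ← Set.ncard_image_of_injective _ (Subtype.val_injective
      (p := fun a => a ∈ V)), ← Set.image_comp]
    have h3 : (Subtype.val ∘ g) = fun b : {b // b ∈ B} => p b.1 := rfl
    rw [h3]
    have h4 : (fun b : {b // b ∈ B} => p b.1) '' {b : {b // b ∈ B} | (x : α) ∈ (b : Finset α)}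
        = ↑((B.filter (fun b => (x : α) ∈ b)).image p) := by
      ext a
      simp only [Set.mem_image, Set.mem_setOf_eq, Finset.coe_image, Finset.mem_coe,
        Finset.mem_filter, Finset.mem_image]
      constructor
      · rintro ⟨b, hb, rfl⟩
        exact ⟨b.1, ⟨b.2, hb⟩, rfl⟩
      · rintro ⟨b, ⟨hbB, hxb⟩, rfl⟩
        exact ⟨⟨b, hbB⟩, hxb, rfl⟩
    rw [h4, Set.ncard_coe_finset]
  have hhued : ∀ w, min r ((leviGraph V B).neighborSet w).ncard
      ≤ (φ '' (leviGraph V B).neighborSet w).ncard := by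
    rintro (x | b)
    · rw [levi_deg_inl hr hS, hkeyl x]
      exact le_trans (min_le_left _ _) (hpcard x.1 x.2)
    · rw [levi_deg_inr hS]
      have h1 : (φ '' (leviGraph V B).neighborSet (Sum.inr b)).ncard = r := by
        rw [levi_nb_inr, ← Set.image_comp]
        have h2 : φ ∘ Sum.inl = fun a : {a // a ∈ V} => hc a := rfl
        rw [h2]
        have h3 : ((fun a : {a // a ∈ V} => hc a)
            '' {x : {x // x ∈ V} | (x : α) ∈ (b : Finset α)}).ncard
            = ({x : {x // x ∈ V} | (x : α) ∈ (b : Finset α)} : Set _).ncard :=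
          Set.ncard_image_of_injective _ hc.injective
        rw [h3, set_ncard_subtype (s := V) (P := fun x => x ∈ (b : Finset α))]
        have h5 : V.filter (fun x => x ∈ (b : Finset α)) = (b : Finset α) := by
          ext a
          simp only [Finset.mem_filter]
          exact ⟨fun h => h.2, fun h => ⟨(hS.2.1 b b.2).1 h, h⟩⟩
        rw [h5, (hS.2.1 b b.2).2]
      rw [h1]
      exact min_le_left _ _
  exact Nat.sInf_le ⟨φ, hproper, hhued⟩
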